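/- Let S be a nonempty subset of [m] and let V be a finitely generated C^m_G-module generated by its slice V[[s]] for some object s of C^S. If t_1^S(V) ≤ t_0^S(V), then V is S-induced. -/

import Mathlib

open CategoryTheory Limits
open scoped TensorProduct
noncomputable section

@[ext] structure FIObj where
  n : ℕ

instance : Category FIObj where
  Hom a b := Fin a.n ↪ Fin b.n
  id _ := Function.Embedding.refl _
  comp f g := f.trans g

@[ext] structure FImObj (m : ℕ) where
  comp : Fin m → ℕ

instance (m : ℕ) : Category (FImObj m) where
  Hom x y := ∀ j, Fin (x.comp j) ↪ Fin (y.comp j)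
  id _ := fun _ => Function.Embedding.refl _
  comp f g := fun j => (f j).trans (g j)

abbrev FImG (m : ℕ) (G : Type) [Group G] := FImObj m × CategoryTheory.SingleObj G

@[simp] lemma FImObj.comp_def {m : ℕ} {x y z : FImObj m} (f : x ⟶ y) (g : y ⟶ z) (j : Fin m) :
    (f ≫ g) j = (f j).trans (g j) := rfl

@[simp] lemma FImObj.id_def {m : ℕ} (x : FImObj m) (j : Fin m) :
    (𝟙 x : x ⟶ x) j = Function.Embedding.refl _ := rfl

def shiftEmb (K : ℕ) {a b : ℕ} (f : Fin a ↪ Fin b) : Fin (a + K) ↪ Fin (b + K) :=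
  finSumFinEquiv.symm.toEmbedding.trans
    ((f.sumMap (Function.Embedding.refl (Fin K))).trans finSumFinEquiv.toEmbedding)

@[simp] lemma shiftEmb_castAdd (K : ℕ) {a b : ℕ} (f : Fin a ↪ Fin b) (x : Fin a) :
    shiftEmb K f (Fin.castAdd K x) = Fin.castAdd K (f x) := by
  simp [shiftEmb]

lemma shiftEmb_id (K a : ℕ) :
    shiftEmb K (Function.Embedding.refl (Fin a)) = Function.Embedding.refl _ := by
  ext x
  obtain ⟨y, rfl⟩ := finSumFinEquiv.surjective x
  cases y <;> simp [shiftEmb]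

lemma shiftEmb_trans (K : ℕ) {a b c : ℕ} (f : Fin a ↪ Fin b) (g : Fin b ↪ Fin c) :
    shiftEmb K (f.trans g) = (shiftEmb K f).trans (shiftEmb K g) := by
  ext x
  obtain ⟨y, rfl⟩ := finSumFinEquiv.surjective x
  cases y <;> simp [shiftEmb]

def addF (m : ℕ) (e : Fin m → ℕ) : FImObj m ⥤ FImObj m where
  obj x := ⟨fun j => x.comp j + e j⟩
  map f := fun j => shiftEmb (e j) (f j)
  map_id x := funext fun j => shiftEmb_id _ _
  map_comp f g := funext fun j => shiftEmb_trans _ _ _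

variable (m : ℕ) (G : Type) [Group G] (k : Type) [Field k]

/-- The `i`-th self-embedding functor `ι_i` (more generally, the self-embedding functor
attached to a vector `e` of shifts), extended to `C^m_G` by the identity on `G`. -/
def addFG (e : Fin m → ℕ) : FImG m G ⥤ FImG m G := (addF m e).prod (𝟭 _)

/-- The category of `C^m_G`-modules over `k`, i.e. of functors `C^m_G ⥤ Vect_k`. -/
abbrev ModG := FImG m G ⥤ ModuleCat.{0} k

instance : HasFiniteBiproducts (ModG m G k) := Abelian.hasFiniteBiproducts

/-- The shift functor attached to a shift vector `e`, given by precomposition with the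
self-embedding functor; `Σ_i` is recovered as `e = Pi.single i 1`. -/
def sigmaF (e : Fin m → ℕ) : ModG m G k ⥤ ModG m G k :=
  (Functor.whiskeringLeft _ _ _).obj (addFG m G e)

/-- The canonical morphism `x ⟶ ι_e(x)` in `C^m_G`. -/
def incHom (e : Fin m → ℕ) (x : FImG m G) : x ⟶ (addFG m G e).obj x :=
  (fun j => ⟨Fin.castAdd (e j), fun u v huv => Fin.castAdd_injective _ _ huv⟩, (1 : G))

lemma incHom_naturality (e : Fin m → ℕ) {x y : FImG m G} (f : x ⟶ y) :
    incHom m G e x ≫ (addFG m G e).map f = f ≫ incHom m G e y := by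
  refine Prod.ext ?_ ?_
  · funext j
    ext t
    exact congrArg Fin.val (shiftEmb_castAdd (e j) (f.1 j) t)
  · simp [incHom, addFG, CategoryTheory.SingleObj.comp_as_mul]

/-- The natural inclusion `V ⟶ Σ_e V`. -/
def incMapV (e : Fin m → ℕ) (V : ModG m G k) : V ⟶ (sigmaF m G k e).obj V where
  app x := V.map (incHom m G e x)
  naturality x y f := by
    dsimp [sigmaF]
    rw [← V.map_comp, ← V.map_comp, incHom_naturality]

/-- The natural transformation `𝟭 ⟶ Σ_e` on the category of `C^m_G`-modules. -/
def incNat (e : Fin m → ℕ) : 𝟭 (ModG m G k) ⟶ sigmaF m G k e where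
  app V := incMapV m G k e V
  naturality V W φ := by
    apply NatTrans.ext; funext x
    exact (φ.naturality (incHom m G e x)).symm

/-- The kernel functor value `K_e V`, the kernel of the natural map `V ⟶ Σ_e V`;
the `i`-th kernel functor `K_i` of the paper is recovered with `e = Pi.single i 1`. -/
def Kobj (e : Fin m → ℕ) (V : ModG m G k) : ModG m G k :=
  kernel (incMapV m G k e V)

/-- The derivative functor `D_e`, sending `V` to the cokernel of `V ⟶ Σ_e V`;
the `i`-th derivative functor `D_i` of the paper is recovered with `e = Pi.single i 1`. -/
def Dfun (e : Fin m → ℕ) : ModG m G k ⥤ ModG m G k where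
  obj V := cokernel (incMapV m G k e V)
  map {V W} φ := cokernel.map _ _ φ ((sigmaF m G k e).map φ)
    ((incNat m G k e).naturality φ).symm
  map_id X := coequalizer.hom_ext (by simp [cokernel.map])
  map_comp f g := coequalizer.hom_ext (by simp [cokernel.map])

instance sigmaF_additive (e : Fin m → ℕ) : (sigmaF m G k e).Additive :=
  ⟨by intros; apply NatTrans.ext; funext x; rfl⟩

instance Dfun_pzm (e : Fin m → ℕ) : (Dfun m G k e).PreservesZeroMorphisms where
  map_zero X Y := coequalizer.hom_ext (by simp [Dfun, cokernel.map]; exact comp_zero.symm)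

/-- The functor `D_S = ⊕_{i ∈ S} D_i`. -/
def DSfun (S : Finset (Fin m)) : ModG m G k ⥤ ModG m G k where
  obj V := ⨁ (fun i : {i // i ∈ S} => (Dfun m G k (Pi.single i.1 1)).obj V)
  map φ := biproduct.map (fun i => (Dfun m G k (Pi.single i.1 1)).map φ)
  map_id X := by ext i; simp
  map_comp f g := by ext i; simp

instance DSfun_pzm (S : Finset (Fin m)) : (DSfun m G k S).PreservesZeroMorphisms where
  map_zero X Y := by
    apply biproduct.hom_ext
    intro i
    simp [DSfun]
    exact zero_comp.symm

/-- The `S`-degree of a morphism `α : x ⟶ y` in `C^m_G`: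
`deg_S(α) = ∑_{i ∈ S} (y_i − x_i)`. -/
def degS (S : Finset (Fin m)) {x y : FImG m G} (_ : x ⟶ y) : ℤ :=
  ∑ i ∈ S, ((y.1.comp i : ℤ) - (x.1.comp i : ℤ))

/-- An element `v ∈ V(x)` is `S`-torsion if some morphism `α` with `deg_S(α) > 0` and
`deg_{[m]∖S}(α) = 0` kills it. -/
def IsTorsionElt (S : Finset (Fin m)) (V : ModG m G k) {x : FImG m G} (v : V.obj x) : Prop :=
  ∃ (y : FImG m G) (α : x ⟶ y),
    0 < degS m G S α ∧ degS m G Sᶜ α = 0 ∧ V.map α v = 0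

/-- A `C^m_G`-module is `S`-torsion free if it has no nonzero `S`-torsion element. -/
def STorsionFree (S : Finset (Fin m)) (V : ModG m G k) : Prop :=
  ∀ (x : FImG m G) (v : V.obj x), IsTorsionElt m G k S V v → v = 0

/-- The free (projective) module `M(x)`, the `k`-linearization of the representable
functor at the object `x`. -/
def RepM (x : FImG m G) : ModG m G k :=
  coyoneda.obj (Opposite.op x) ⋙ ModuleCat.free k

/-- A `C^m_G`-module is finitely generated if it is a quotient of a finite direct sum
of linearizations of representable functors. -/
def FinitelyGenerated (V : ModG m G k) : Prop :=
  ∃ (r : ℕ) (xs : Fin r → FImG m G) (p : (⨁ fun a => RepM m G k (xs a)) ⟶ V), Epi p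

/-- The subcategory `R_s = Aut(s) × C^{[m]∖S}_G` of `C^m_G`, realized as the full
subcategory of objects whose `S`-coordinates agree with `s`. -/
def Rcat (S : Finset (Fin m)) (s : Fin m → ℕ) :=
  CategoryTheory.ObjectProperty.FullSubcategory (fun x : FImG m G => ∀ j ∈ S, x.1.comp j = s j)

instance (S : Finset (Fin m)) (s : Fin m → ℕ) : Category (Rcat m G S s) :=
  CategoryTheory.ObjectProperty.FullSubcategory.category _

/-- The inclusion `R_s ↪ C^m_G`. -/
def inclR (S : Finset (Fin m)) (s : Fin m → ℕ) : Rcat m G S s ⥤ FImG m G :=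
  ObjectProperty.ι _

set_option synthInstance.maxHeartbeats 1000000 in
instance hasLKE (S : Finset (Fin m)) (s : Fin m → ℕ) (F : Rcat m G S s ⥤ ModuleCat.{0} k) :
    (inclR m G S s).HasLeftKanExtension F := inferInstance

/-- The induction functor `F_s = M̄(s) ⊗_{R_s} −`, realized as the left Kan extension
along the inclusion `R_s ↪ C^m_G`. -/
def indF (S : Finset (Fin m)) (s : Fin m → ℕ) :
    (Rcat m G S s ⥤ ModuleCat.{0} k) ⥤ ModG m G k :=
  (inclR m G S s).lan

/-- A module is `S`-induced if it is isomorphic to `F_s(W)` for some object `s` of `C^S`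
and some `R_s`-module `W`. -/
def IsInduced (S : Finset (Fin m)) (V : ModG m G k) : Prop :=
  ∃ (s : Fin m → ℕ) (W : Rcat m G S s ⥤ ModuleCat.{0} k),
    Nonempty (V ≅ (indF m G k S s).obj W)

/-- A module is `S`-semi-induced if it has a finite filtration whose successive quotients
are `S`-induced; equivalently (inductively): a zero module is `S`-semi-induced, and any
extension of an `S`-induced module by an `S`-semi-induced module is `S`-semi-induced. -/
inductive IsSemiInduced (S : Finset (Fin m)) : ModG m G k → Prop
  | of_isZero (V : ModG m G k) : Limits.IsZero V → IsSemiInduced S V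
  | step (sc : ShortComplex (ModG m G k)) : sc.ShortExact → IsSemiInduced S sc.X₁ →
      IsInduced m G k S sc.X₃ → IsSemiInduced S sc.X₂

/-- `V` is generated by its slice `V[[s]]` iff the counit `F_s(V[[s]]) ⟶ V` of the
Kan-extension adjunction (induction ⊣ restriction) is an epimorphism. -/
def GeneratedBySlice (S : Finset (Fin m)) (s : Fin m → ℕ) (V : ModG m G k) : Prop :=
  Epi ((((inclR m G S s).lanAdjunction (ModuleCat.{0} k)).counit).app V)

lemma comp_le_of_hom {x y : FImG m G} (f : x ⟶ y) (i : Fin m) :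
    x.1.comp i ≤ y.1.comp i := by
  simpa using Fintype.card_le_of_embedding (f.1 i)

lemma degS_nonneg (S : Finset (Fin m)) {x y : FImG m G} (f : x ⟶ y) :
    0 ≤ degS m G S f := by
  refine Finset.sum_nonneg fun i _ => ?_
  have := comp_le_of_hom m G f i
  omega

lemma degS_comp (S : Finset (Fin m)) {x y z : FImG m G} (f : x ⟶ y) (g : y ⟶ z) :
    degS m G S (f ≫ g) = degS m G S f + degS m G S g := by
  rw [degS, degS, degS, ← Finset.sum_add_distrib]
  exact Finset.sum_congr rfl fun i _ => by ring

/-- The value at `x` of the submodule `𝔍_S V ⊆ V`, where `𝔍_S` is the two-sided ideal of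
the category algebra spanned by all morphisms of positive `S`-degree. -/
def Jsub (S : Finset (Fin m)) (V : ModG m G k) (x : FImG m G) : Submodule k (V.obj x) :=
  ⨆ (y : FImG m G) (α : y ⟶ x) (_ : 0 < degS m G S α), LinearMap.range (V.map α).hom

lemma Jsub_le_comap (S : Finset (Fin m)) (V : ModG m G k) {x x' : FImG m G} (f : x ⟶ x') :
    Jsub m G k S V x ≤ (Jsub m G k S V x').comap (V.map f).hom := by
  refine iSup_le fun y => iSup_le fun α => iSup_le fun hα => ?_
  rintro v ⟨w, rfl⟩
  have h1 : V.map f (V.map α w) = V.map (α ≫ f) w := by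
    rw [V.map_comp]; rfl
  have h2 : 0 < degS m G S (α ≫ f) := by
    rw [degS_comp]
    have := degS_nonneg m G S f
    omega
  refine Submodule.mem_comap.2 ?_
  rw [h1]
  exact Submodule.mem_iSup_of_mem y (Submodule.mem_iSup_of_mem (α ≫ f)
    (Submodule.mem_iSup_of_mem h2 ⟨w, rfl⟩))

lemma Jsub_le_comap_app (S : Finset (Fin m)) {V W : ModG m G k} (φ : V ⟶ W) (x : FImG m G) :
    Jsub m G k S V x ≤ (Jsub m G k S W x).comap (φ.app x).hom := by
  refine iSup_le fun y => iSup_le fun α => iSup_le fun hα => ?_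
  rintro v ⟨w, rfl⟩
  have h1 : φ.app x (V.map α w) = W.map α (φ.app y w) := by
    have := φ.naturality α
    exact congrFun (congrArg (fun (t : V.obj y ⟶ W.obj x) => ⇑t) this) w
  refine Submodule.mem_comap.2 ?_
  rw [h1]
  exact Submodule.mem_iSup_of_mem y (Submodule.mem_iSup_of_mem α
    (Submodule.mem_iSup_of_mem hα ⟨_, rfl⟩))

/-- The value of `H_0^S(V) = V/𝔍_S V` as a `C^m_G`-module. -/
def H0Sobj (S : Finset (Fin m)) (V : ModG m G k) : ModG m G k where
  obj x := ModuleCat.of k (V.obj x ⧸ Jsub m G k S V x)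
  map {x x'} f := ModuleCat.ofHom (Submodule.mapQ _ _ (V.map f).hom (Jsub_le_comap m G k S V f))
  map_id x := by
    apply ModuleCat.hom_ext
    apply Submodule.linearMap_qext
    ext v
    show Submodule.Quotient.mk ((V.map (𝟙 x)).hom v) = Submodule.Quotient.mk v
    rw [V.map_id]
    rfl
  map_comp {x y z} f g := by
    apply ModuleCat.hom_ext
    apply Submodule.linearMap_qext
    ext v
    show Submodule.Quotient.mk ((V.map (f ≫ g)).hom v)
      = Submodule.Quotient.mk ((V.map g).hom ((V.map f).hom v))
    rw [V.map_comp]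
    rfl

/-- The functor `H_0^S`, sending `V` to `V/𝔍_S V`. -/
def H0S (S : Finset (Fin m)) : ModG m G k ⥤ ModG m G k where
  obj V := H0Sobj m G k S V
  map {V W} φ :=
    { app := fun x => ModuleCat.ofHom (Submodule.mapQ _ _ (φ.app x).hom (Jsub_le_comap_app m G k S φ x))
      naturality := fun x y f => by
        apply ModuleCat.hom_ext
        apply Submodule.linearMap_qext
        ext v
        have := φ.naturality f
        have h1 : (φ.app y).hom ((V.map f).hom v) = (W.map f).hom ((φ.app x).hom v) :=
          congrFun (congrArg (fun (t : V.obj x ⟶ W.obj y) => ⇑t.hom) this) v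
        show Submodule.Quotient.mk ((φ.app y).hom ((V.map f).hom v))
          = Submodule.Quotient.mk ((W.map f).hom ((φ.app x).hom v))
        rw [h1] }
  map_id V := by
    apply NatTrans.ext; funext x
    apply ModuleCat.hom_ext
    apply Submodule.linearMap_qext
    ext v
    rfl
  map_comp {U V W} φ ψ := by
    apply NatTrans.ext; funext x
    apply ModuleCat.hom_ext
    apply Submodule.linearMap_qext
    ext v
    rfl

instance (S : Finset (Fin m)) : (H0S m G k S).Additive where
  map_add := by
    intro V W φ ψ
    apply NatTrans.ext; funext x
    apply ModuleCat.hom_ext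
    apply Submodule.linearMap_qext
    ext v
    rfl

/-- The free module `M(x) ⊗ W` on a vector space `W` placed at the object `x`. -/
def freeAt (x : FImG m G) (W : ModuleCat.{0} k) : ModG m G k where
  obj y := ModuleCat.of k ((x ⟶ y) →₀ W)
  map {y z} g := ModuleCat.ofHom (Finsupp.lmapDomain W k (fun α => α ≫ g))
  map_id y := by
    have h : (fun α : x ⟶ y => α ≫ 𝟙 y) = id := funext fun α => Category.comp_id α
    apply ModuleCat.hom_ext
    show Finsupp.lmapDomain W k (fun α : x ⟶ y => α ≫ 𝟙 y) = _
    rw [h, Finsupp.lmapDomain_id]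
    rfl
  map_comp {y z w} g h := by
    have hc : (fun α : x ⟶ y => α ≫ (g ≫ h)) = (fun β : x ⟶ z => β ≫ h) ∘ (fun α : x ⟶ y => α ≫ g) :=
      funext fun α => (Category.assoc α g h).symm
    apply ModuleCat.hom_ext
    show Finsupp.lmapDomain W k (fun α : x ⟶ y => α ≫ (g ≫ h)) = _
    rw [hc, Finsupp.lmapDomain_comp]
    rfl

/-- The universal property map out of `freeAt x W`. -/
def fromFree {x : FImG m G} {W : ModuleCat.{0} k} {N : ModG m G k} (φ : W →ₗ[k] N.obj x) :
    freeAt m G k x W ⟶ N where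
  app y := ModuleCat.ofHom (Finsupp.lsum k (fun α : x ⟶ y => (N.map α).hom.comp φ))
  naturality {y z} g := by
    apply ModuleCat.hom_ext
    apply Finsupp.lhom_ext
    intro α w
    show Finsupp.lsum k (fun β : x ⟶ z => (N.map β).hom.comp φ)
        (Finsupp.mapDomain (fun β => β ≫ g) (Finsupp.single α w))
      = (N.map g).hom ((Finsupp.lsum k (fun β : x ⟶ y => (N.map β).hom.comp φ)) (Finsupp.single α w))
    rw [Finsupp.mapDomain_single]
    simp only [Finsupp.lsum_single, LinearMap.comp_apply]
    rw [N.map_comp]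
    rfl

instance freeAt_projective (x : FImG m G) (W : ModuleCat.{0} k) :
    Projective (freeAt m G k x W) where
  factors {E X} f e he := by
    have hsurj : Function.Surjective (e.app x) := by
      rw [← ModuleCat.epi_iff_surjective]
      infer_instance
    haveI : Module.Projective k W := Module.Projective.of_free
    obtain ⟨φ, hφ⟩ := Module.projective_lifting_property (e.app x).hom
      ((f.app x).hom.comp (Finsupp.lsingle (𝟙 x))) hsurj
    refine ⟨fromFree m G k φ, ?_⟩
    apply NatTrans.ext; funext y
    apply ModuleCat.hom_ext
    apply Finsupp.lhom_ext
    intro α w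
    show (e.app y).hom ((Finsupp.lsum k (fun β : x ⟶ y => (E.map β).hom.comp φ)) (Finsupp.single α w))
      = (f.app y).hom (Finsupp.single α w)
    rw [Finsupp.lsum_single, LinearMap.comp_apply]
    have h1 : (e.app y).hom ((E.map α).hom (φ w)) = (X.map α).hom ((e.app x).hom (φ w)) :=
      congrFun (congrArg (fun (t : E.obj x ⟶ X.obj y) => ⇑t.hom) (e.naturality α)) (φ w)
    have h2 : (e.app x).hom (φ w) = (f.app x).hom (Finsupp.single (𝟙 x) w) :=
      congrFun (congrArg (fun (t : W →ₗ[k] X.obj x) => ⇑t) hφ) w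
    have h3 : (X.map α).hom ((f.app x).hom (Finsupp.single (𝟙 x) w))
        = (f.app y).hom (((freeAt m G k x W).map α).hom (Finsupp.single (𝟙 x) w)) :=
      (congrFun (congrArg (fun (t : (freeAt m G k x W).obj x ⟶ X.obj y) => ⇑t.hom)
        (f.naturality α)) (Finsupp.single (𝟙 x) w)).symm
    have h4 : ((freeAt m G k x W).map α).hom (Finsupp.single (𝟙 x) w) = Finsupp.single α w := by
      show Finsupp.mapDomain (fun β : x ⟶ x => β ≫ α) (Finsupp.single (𝟙 x) w)
        = Finsupp.single α w
      rw [Finsupp.mapDomain_single, Category.id_comp]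
    rw [h1, h2, h3, h4]

lemma projective_sigma {J : Type} (f : J → ModG m G k) [HasCoproduct f]
    (h : ∀ j, Projective (f j)) : Projective (∐ f) where
  factors {E X} g e he := by
    refine ⟨Sigma.desc fun j => (h j).factors (Sigma.ι f j ≫ g) e |>.choose, ?_⟩
    apply Sigma.hom_ext
    intro j
    rw [← Category.assoc, colimit.ι_desc]
    exact ((h j).factors (Sigma.ι f j ≫ g) e).choose_spec

/-- The canonical projective cover `⊕_x M(x) ⊗ V(x) ⟶ V`. -/
def coverHom (V : ModG m G k) : (∐ fun x : FImG m G => freeAt m G k x (V.obj x)) ⟶ V :=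
  Sigma.desc fun x => fromFree m G k LinearMap.id

instance coverHom_epi (V : ModG m G k) : Epi (coverHom m G k V) := by
  haveI : ∀ y : FImG m G, Epi ((coverHom m G k V).app y) := by
    intro y
    rw [ModuleCat.epi_iff_surjective]
    intro v
    refine ⟨(Sigma.ι (fun x : FImG m G => freeAt m G k x (V.obj x)) y).app y
      (Finsupp.single (𝟙 y) v), ?_⟩
    have h1 : Sigma.ι (fun x : FImG m G => freeAt m G k x (V.obj x)) y ≫ coverHom m G k V
        = fromFree m G k LinearMap.id := colimit.ι_desc _ _
    have h2 := congrFun (congrArg (fun (t : freeAt m G k y (V.obj y) ⟶ V) => ⇑(t.app y)) h1)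
      (Finsupp.single (𝟙 y) v)
    refine Eq.trans ?_ (h2.trans ?_)
    · rfl
    · show (Finsupp.lsum k (fun α : y ⟶ y => (V.map α).hom.comp LinearMap.id)) (Finsupp.single (𝟙 y) v) = v
      rw [Finsupp.lsum_single, LinearMap.comp_apply, LinearMap.id_apply, V.map_id]
      rfl
  exact NatTrans.epi_of_epi_app _

instance : EnoughProjectives (ModG m G k) where
  presentation V := ⟨{
    p := ∐ fun x : FImG m G => freeAt m G k x (V.obj x)
    projective := projective_sigma m G k _ fun x => freeAt_projective m G k x (V.obj x)
    f := coverHom m G k V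
    epi := coverHom_epi m G k V }⟩

/-- The `i`-th `S`-homology functor `H_i^S`, the `i`-th left derived functor of `H_0^S`. -/
def HiS (S : Finset (Fin m)) (i : ℕ) : ModG m G k ⥤ ModG m G k :=
  (H0S m G k S).leftDerived i

/-- The slice `W[[s]]` of a module on the object `s` of `C^S` is nonzero. -/
def SliceNonzero (S : Finset (Fin m)) (W : ModG m G k) (s : Fin m → ℕ) : Prop :=
  ∃ x : FImG m G, (∀ j ∈ S, x.1.comp j = s j) ∧ Nontrivial (W.obj x)

/-- The `i`-th `S`-homological degree `t_i^S(V)`, the supremum of the `S`-degrees of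
objects `s` of `C^S` with `H_i^S(V)[[s]] ≠ 0` (with `⊥` playing the role of `−1` when
there is no such object). -/
def tS (S : Finset (Fin m)) (i : ℕ) (V : ModG m G k) : WithBot ℕ∞ :=
  sSup ((fun s : Fin m → ℕ => (((∑ j ∈ S, s j : ℕ) : ℕ∞) : WithBot ℕ∞)) ''
    {s | SliceNonzero m G k S ((HiS m G k S i).obj V) s})

/-! ### Plain `C^m`-modules (no group factor) -/

/-- The category of `C^m`-modules over `k`. -/
abbrev ModM := FImObj m ⥤ ModuleCat.{0} k

instance : HasFiniteBiproducts (ModM m k) := Abelian.hasFiniteBiproducts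

/-- The category of `C`-modules (`FI`-modules) over `k`. -/
abbrev ModC := FIObj ⥤ ModuleCat.{0} k

instance : HasFiniteBiproducts (ModC k) := Abelian.hasFiniteBiproducts

/-- The shift functor `Σ_e` on `C^m`-modules. -/
def sigmaFM (e : Fin m → ℕ) : ModM m k ⥤ ModM m k :=
  (Functor.whiskeringLeft _ _ _).obj (addF m e)

/-- The canonical inclusion `x ⟶ ι_e(x)` in `C^m`. -/
def incHomM (e : Fin m → ℕ) (x : FImObj m) : x ⟶ (addF m e).obj x :=
  fun j => ⟨Fin.castAdd (e j), fun u v huv => Fin.castAdd_injective _ _ huv⟩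

lemma incHomM_naturality (e : Fin m → ℕ) {x y : FImObj m} (f : x ⟶ y) :
    incHomM m e x ≫ (addF m e).map f = f ≫ incHomM m e y := by
  funext j
  ext t
  exact congrArg Fin.val (shiftEmb_castAdd (e j) (f j) t)

/-- The natural inclusion `V ⟶ Σ_e V` for a `C^m`-module `V`. -/
def incMapVM (e : Fin m → ℕ) (V : ModM m k) : V ⟶ (sigmaFM m k e).obj V where
  app x := V.map (incHomM m e x)
  naturality x y f := by
    dsimp [sigmaFM]
    rw [← V.map_comp, ← V.map_comp, incHomM_naturality]

/-- The derivative `D_e V`, the cokernel of `V ⟶ Σ_e V`, for a `C^m`-module `V`. -/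
def DobjM (e : Fin m → ℕ) (V : ModM m k) : ModM m k :=
  cokernel (incMapVM m k e V)

/-- The free `C^m`-module `M(x)` at the object `x`. -/
def RepMM (x : FImObj m) : ModM m k :=
  coyoneda.obj (Opposite.op x) ⋙ ModuleCat.free k

/-- Finite generation for `C^m`-modules. -/
def FinitelyGeneratedM (V : ModM m k) : Prop :=
  ∃ (r : ℕ) (xs : Fin r → FImObj m) (p : (⨁ fun a => RepMM m k (xs a)) ⟶ V), Epi p

/-- The free `C`-module `M(x)` at an object `x` of `FI`. -/
def RepMC (x : FIObj) : ModC k :=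
  coyoneda.obj (Opposite.op x) ⋙ ModuleCat.free k

/-- Finite generation for `C`-modules. -/
def FinitelyGeneratedC (V : ModC k) : Prop :=
  ∃ (r : ℕ) (xs : Fin r → FIObj) (p : (⨁ fun a => RepMC k (xs a)) ⟶ V), Epi p

/-- The external tensor product `I₁ ⊠ ⋯ ⊠ I_m` of `C`-modules, a `C^m`-module. -/
def extProd (I : Fin m → ModC k) : ModM m k where
  obj x := ModuleCat.of k (⨂[k] j, (I j).obj ⟨x.comp j⟩)
  map {x y} f := ModuleCat.ofHom (PiTensorProduct.map (fun j => ((I j).map (f j)).hom))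
  map_id x := by
    have h : (fun j => ((I j).map ((𝟙 x : x ⟶ x) j)).hom) = fun j => LinearMap.id := by
      funext j
      show ((I j).map (𝟙 (⟨x.comp j⟩ : FIObj))).hom = LinearMap.id
      rw [(I j).map_id]
      rfl
    apply ModuleCat.hom_ext
    show PiTensorProduct.map (fun j => ((I j).map ((𝟙 x : x ⟶ x) j)).hom) = _
    rw [h, PiTensorProduct.map_id]
    rfl
  map_comp {x y z} f g := by
    have h : (fun j => ((I j).map ((f ≫ g) j)).hom)
        = fun j => ((I j).map (g j)).hom.comp ((I j).map (f j)).hom := by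
      funext j
      show ((I j).map ((f j : (⟨x.comp j⟩ : FIObj) ⟶ ⟨y.comp j⟩) ≫ (g j))).hom = _
      rw [(I j).map_comp]
      rfl
    apply ModuleCat.hom_ext
    show PiTensorProduct.map (fun j => ((I j).map ((f ≫ g) j)).hom) = _
    rw [h, PiTensorProduct.map_comp]
    rfl

/-- The `C^m_G`-module `V ⊠ kG`, where `kG` carries the (left regular) `G`-action. -/
def tensorG (V : ModM m k) : ModG m G k where
  obj x := ModuleCat.of k (TensorProduct k (V.obj x.1) (G →₀ k))
  map {x y} f := ModuleCat.ofHom (TensorProduct.map (V.map f.1).hom (Finsupp.lmapDomain k k (f.2 • · : G → G)))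
  map_id x := by
    have h1 : (V.map (𝟙 x.1)).hom = LinearMap.id := by rw [V.map_id]; rfl
    have h2 : Finsupp.lmapDomain k k ((1 : G) • · : G → G) = LinearMap.id := by
      ext; simp
    apply ModuleCat.hom_ext
    show TensorProduct.map (V.map (𝟙 x.1)).hom (Finsupp.lmapDomain k k ((1 : G) • · : G → G)) = _
    rw [h1, h2, TensorProduct.map_id]
    rfl
  map_comp {x y z} f g := by
    have h1 : (V.map ((f ≫ g).1)).hom = (V.map g.1).hom.comp (V.map f.1).hom := by
      rw [show (f ≫ g).1 = f.1 ≫ g.1 from rfl, V.map_comp]; rfl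
    have h2 : Finsupp.lmapDomain k k (((f ≫ g).2) • · : G → G)
        = (Finsupp.lmapDomain k k (g.2 • · : G → G)).comp (Finsupp.lmapDomain k k (f.2 • · : G → G)) := by
      show Finsupp.lmapDomain k k ((g.2 * f.2) • · : G → G) = _
      rw [← Finsupp.lmapDomain_comp]
      congr 1
      funext a
      exact mul_smul _ _ _
    apply ModuleCat.hom_ext
    show TensorProduct.map (V.map ((f ≫ g).1)).hom (Finsupp.lmapDomain k k (((f ≫ g).2) • · : G → G)) = _
    rw [h1, h2, TensorProduct.map_comp]
    rfl

end



section InducedProofAux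
open CategoryTheory Limits

set_option maxHeartbeats 1000000
set_option synthInstance.maxHeartbeats 1000000

namespace InducedProofAux

variable {m : ℕ} {G : Type} [Group G] {k : Type} [Field k]
variable (S : Finset (Fin m))

/-- The `S`-degree of an object. -/
def dS (x : FImG m G) : ℕ := ∑ j ∈ S, x.1.comp j

lemma degS_eq {x y : FImG m G} (α : x ⟶ y) :
    degS m G S α = (dS (G := G) S y : ℤ) - (dS (G := G) S x : ℤ) := by
  simp only [degS, dS, Finset.sum_sub_distrib, Nat.cast_sum]

lemma dS_lt_of_degS_pos {x y : FImG m G} (α : x ⟶ y) (h : 0 < degS m G S α) :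
    dS S x < dS S y := by
  rw [degS_eq] at h; omega

/-- The "relative" version of `Jsub`, allowing images of chosen submodules `T`. -/
def relSup (W : ModG m G k) (T : ∀ z : FImG m G, Submodule k (W.obj z)) (x : FImG m G) :
    Submodule k (W.obj x) :=
  ⨆ (y : FImG m G) (α : y ⟶ x) (_ : 0 < degS m G S α), (T y).map (W.map α).hom

lemma map_mem_relSup (W : ModG m G k) (T : ∀ z : FImG m G, Submodule k (W.obj z))
    {x y : FImG m G} (α : y ⟶ x) (hα : 0 < degS m G S α) {w : W.obj y} (hw : w ∈ T y) :
    W.map α w ∈ relSup S W T x :=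
  Submodule.mem_iSup_of_mem y (Submodule.mem_iSup_of_mem α (Submodule.mem_iSup_of_mem hα
    ⟨w, hw, rfl⟩))

lemma relSup_induction (W : ModG m G k) (T : ∀ z : FImG m G, Submodule k (W.obj z))
    {x : FImG m G} {p : W.obj x → Prop} {v : W.obj x}
    (hv : v ∈ relSup S W T x) (h0 : p 0) (hadd : ∀ a b, p a → p b → p (a + b))
    (helem : ∀ (y : FImG m G) (α : y ⟶ x), 0 < degS m G S α → ∀ w ∈ T y, p (W.map α w)) :
    p v := by
  refine Submodule.iSup_induction (motive := p) _ hv (fun y w hw => ?_) h0 hadd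
  refine Submodule.iSup_induction (motive := p) _ hw (fun α w hw => ?_) h0 hadd
  refine Submodule.iSup_induction (motive := p) _ hw (fun hα w hw => ?_) h0 hadd
  rename_i hv
  obtain ⟨w', hw', rfl⟩ := hw
  exact helem y α hα w' hw'

lemma jsub_eq_relSup (W : ModG m G k) (x : FImG m G) :
    Jsub m G k S W x = relSup S W (fun z => ⊤) x := by
  unfold Jsub relSup
  refine iSup_congr fun y => iSup_congr fun α => iSup_congr fun hα => ?_
  rw [Submodule.map_top]

lemma jsub_induction (W : ModG m G k) {x : FImG m G} {p : W.obj x → Prop} {v : W.obj x}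
    (hv : v ∈ Jsub m G k S W x) (h0 : p 0) (hadd : ∀ a b, p a → p b → p (a + b))
    (helem : ∀ (y : FImG m G) (α : y ⟶ x), 0 < degS m G S α → ∀ w, p (W.map α w)) :
    p v := by
  rw [jsub_eq_relSup] at hv
  exact relSup_induction S W _ hv h0 hadd (fun y α hα w _ => helem y α hα w)

lemma map_mem_jsub (W : ModG m G k) {x y : FImG m G} (α : y ⟶ x)
    (hα : 0 < degS m G S α) (w : W.obj y) : W.map α w ∈ Jsub m G k S W x := by
  rw [jsub_eq_relSup]
  exact map_mem_relSup S W _ α hα trivial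

variable {S} in
lemma nat_app_apply {A B : ModG m G k} (φ : A ⟶ B) {y x : FImG m G} (α : y ⟶ x) (w : A.obj y) :
    φ.app x (A.map α w) = B.map α (φ.app y w) := by
  have := φ.naturality α
  exact (congrFun (congrArg (fun (t : A.obj y ⟶ B.obj x) => ⇑t) this) w)

lemma comp_app_apply {A B C' : ModG m G k} (φ : A ⟶ B) (ψ : B ⟶ C') (x : FImG m G)
    (a : A.obj x) : (φ ≫ ψ).app x a = ψ.app x (φ.app x a) := rfl

/-- Nakayama-type lemma. -/
lemma nakayama {F' V' : ModG m G k} (ε : F' ⟶ V')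
    (h : ∀ (x : FImG m G) (v : F'.obj x), ε.app x v = 0 →
      v ∈ relSup S F' (fun z => LinearMap.ker (ε.app z).hom) x) :
    ∀ (x : FImG m G) (v : F'.obj x), ε.app x v = 0 → v = 0 := by
  suffices H : ∀ (n : ℕ) (x : FImG m G), dS S x = n →
      ∀ (v : F'.obj x), ε.app x v = 0 → v = 0 by
    intro x v hv; exact H (dS S x) x rfl v hv
  intro n
  induction n using Nat.strong_induction_on with
  | _ n IH =>
    intro x hx v hv
    refine relSup_induction (p := fun w => w = 0) S F' _ (h x v hv) rfl
      (fun a b ha hb => by rw [ha, hb, add_zero]) ?_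
    intro y α hα w hw
    have : w = 0 := IH (dS S y) (hx ▸ dS_lt_of_degS_pos S α hα) y rfl w hw
    rw [this, map_zero]

variable (k) in
/-- Joint surjectivity of the legs of a colimit cocone in `ModuleCat`. -/
lemma top_le_iSup_range_cocone {J : Type} [Category.{0} J] {Dg : J ⥤ ModuleCat.{0} k}
    (c : Cocone Dg) (hc : IsColimit c) (v : c.pt) :
    v ∈ ⨆ j : J, LinearMap.range (show Dg.obj j ⟶ c.pt from c.ι.app j).hom := by
  set r : J → Submodule k c.pt :=
    fun j => LinearMap.range (show Dg.obj j ⟶ c.pt from c.ι.app j).hom with hr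
  set N := ⨆ j : J, r j with hN
  let q : c.pt ⟶ ModuleCat.of k (c.pt ⧸ N) := ModuleCat.ofHom N.mkQ
  have hq : q = 0 := by
    refine hc.hom_ext fun j => ?_
    refine ModuleCat.hom_ext (LinearMap.ext fun a => ?_)
    have hmem : (show Dg.obj j ⟶ c.pt from c.ι.app j) a ∈ N :=
      le_iSup r j ⟨a, rfl⟩
    show N.mkQ ((show Dg.obj j ⟶ c.pt from c.ι.app j) a) = 0
    simpa [Submodule.Quotient.mk_eq_zero] using hmem
  have : N.mkQ v = 0 :=
    congrFun (congrArg (fun (t : c.pt ⟶ ModuleCat.of k (c.pt ⧸ N)) => ⇑t.hom) hq) v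
  exact (Submodule.Quotient.mk_eq_zero N).mp this

section LanLemmas

variable (s : Fin m → ℕ)

instance fullInclR : (inclR m G S s).Full := inferInstanceAs (ObjectProperty.ι _).Full
instance faithfulInclR : (inclR m G S s).Faithful :=
  inferInstanceAs (ObjectProperty.ι _).Faithful

lemma costructured_source_comp (x : FImG m G)
    (g : CostructuredArrow (inclR m G S s) x) (j : Fin m) (hj : j ∈ S) :
    ((inclR m G S s).obj g.left).1.comp j = s j := g.left.2 j hj

lemma costructured_le (x : FImG m G)
    (g : CostructuredArrow (inclR m G S s) x) (j : Fin m) (hj : j ∈ S) :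
    s j ≤ x.1.comp j := by
  have h : ((inclR m G S s).obj g.left).1.comp j ≤ x.1.comp j := comp_le_of_hom m G g.hom j
  rwa [costructured_source_comp S s x g j hj] at h

lemma costructured_degS_pos (x : FImG m G) (hx : ∃ j ∈ S, x.1.comp j ≠ s j)
    (g : CostructuredArrow (inclR m G S s) x) : 0 < degS m G S g.hom := by
  refine Finset.sum_pos' (fun j hj => ?_) ?_
  · have h : ((inclR m G S s).obj g.left).1.comp j ≤
        x.1.comp j := comp_le_of_hom m G g.hom j
    omega
  · obtain ⟨j, hj, hne⟩ := hx
    refine ⟨j, hj, ?_⟩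
    have e1 : ((Functor.fromPUnit x).obj g.right).1.comp j = x.1.comp j := rfl
    have e2 : ((inclR m G S s).obj g.left).1.comp j = s j := g.left.2 j hj
    have h3 := costructured_le S s x g j hj
    omega

lemma isEmpty_costructured (x : FImG m G) (hx : ∃ j ∈ S, x.1.comp j < s j) :
    IsEmpty (CostructuredArrow (inclR m G S s) x) := by
  obtain ⟨j, hj, hlt⟩ := hx
  exact ⟨fun g => absurd (costructured_le S s x g j hj) (by omega)⟩

variable (k) in
lemma lan_mem_jsub (W' : Rcat m G S s ⥤ ModuleCat.{0} k) (x : FImG m G)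
    (hx : ∃ j ∈ S, x.1.comp j ≠ s j) (v : (((inclR m G S s).lan.obj W').obj x)) :
    v ∈ Jsub m G k S ((inclR m G S s).lan.obj W') x := by
  set L := inclR m G S s
  have pw := Functor.isPointwiseLeftKanExtensionLeftKanExtensionUnit L W'
  have hv := top_le_iSup_range_cocone k _ (pw x) v
  refine Submodule.iSup_induction (motive := fun w => w ∈ Jsub m G k S (L.lan.obj W') x)
    _ hv (fun g w hw => ?_) (zero_mem _) (fun a b ha hb => add_mem ha hb)
  obtain ⟨a, rfl⟩ := hw
  exact map_mem_jsub S (L.lan.obj W') g.hom (costructured_degS_pos S s x hx g)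
    ((L.lanUnit.app W').app g.left a)

variable (k) in
lemma lan_obj_eq_zero (W' : Rcat m G S s ⥤ ModuleCat.{0} k) (x : FImG m G)
    (hx : ∃ j ∈ S, x.1.comp j < s j) (v : (((inclR m G S s).lan.obj W').obj x)) :
    v = 0 := by
  set L := inclR m G S s
  have pw := Functor.isPointwiseLeftKanExtensionLeftKanExtensionUnit L W'
  have hv := top_le_iSup_range_cocone k _ (pw x) v
  haveI := isEmpty_costructured S s x hx
  rw [iSup_of_empty] at hv
  exact (Submodule.mem_bot k).mp hv

variable (k) in
lemma counit_app_injective_at_slice (V : ModG m G k) (x : FImG m G)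
    (hx : ∀ j ∈ S, x.1.comp j = s j) :
    Function.Injective
      ((((inclR m G S s).lanAdjunction (ModuleCat.{0} k)).counit.app V).app x) := by
  set L := inclR m G S s
  let y : Rcat m G S s := ⟨x, hx⟩
  let u := (L.lanUnit.app (L ⋙ V)).app y
  haveI : IsIso u := inferInstance
  have tri : u ≫ ((L.lanAdjunction (ModuleCat.{0} k)).counit.app V).app (L.obj y) = 𝟙 _ :=
    L.lanUnit_app_app_lanAdjunction_counit_app_app V y
  have husurj : Function.Surjective u := (ConcreteCategory.bijective_of_isIso u).2
  intro a b hab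
  obtain ⟨a', rfl⟩ := husurj a
  obtain ⟨b', rfl⟩ := husurj b
  have h1 : ∀ c, (((L.lanAdjunction (ModuleCat.{0} k)).counit.app V).app x) (u c) = c :=
    fun c => congrFun (congrArg (fun (t : (L ⋙ V).obj y ⟶ (L ⋙ V).obj y) => ⇑t) tri) c
  have : a' = b' := by rw [← h1 a', ← h1 b', hab]
  rw [this]

end LanLemmas

section Chase

variable {S}

/-- The central diagram chase. -/
lemma key_chase {F' V' P0 P1 P2 : ModG m G k} (ε : F' ⟶ V') (σ : P0 ⟶ F') (π₀ : P0 ⟶ V')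
    (d1 : P1 ⟶ P0) (d2 : P2 ⟶ P1)
    (hσ : σ ≫ ε = π₀) (hd1 : d1 ≫ π₀ = 0) (hd2 : d2 ≫ d1 = 0)
    (x : FImG m G)
    (hgenF : ∀ v : F'.obj x, v ∈ Jsub m G k S F' x)
    (hsurjπ : ∀ y : FImG m G, Function.Surjective (π₀.app y))
    (hex0 : ∀ a : P0.obj x, π₀.app x a = 0 → ∃ b, d1.app x b = a)
    (hH1 : ∀ q : P1.obj x, d1.app x q ∈ Jsub m G k S P0 x →
            ∃ r, q - d2.app x r ∈ Jsub m G k S P1 x)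
    (v : F'.obj x) (hv : ε.app x v = 0) :
    v ∈ relSup S F' (fun z => LinearMap.ker (ε.app z).hom) x := by
  set KJ := relSup S F' (fun z => LinearMap.ker (ε.app z).hom) x with hKJ
  have hσap : ∀ (z : FImG m G) (a : P0.obj z), ε.app z (σ.app z a) = π₀.app z a := by
    intro z a
    rw [← comp_app_apply σ ε z a, hσ]
  have hd1ap : ∀ (z : FImG m G) (a : P1.obj z), π₀.app z (d1.app z a) = 0 := by
    intro z a
    rw [← comp_app_apply d1 π₀ z a, hd1]
    rfl
  have hd2ap : ∀ (a : P2.obj x), d1.app x (d2.app x a) = 0 := by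
    intro a
    rw [← comp_app_apply d2 d1 x a, hd2]
    rfl
  -- Step 1 : decompose v using the generators of F'
  have step1 : ∀ v' : F'.obj x, v' ∈ Jsub m G k S F' x →
      ∃ p, p ∈ Jsub m G k S P0 x ∧ π₀.app x p = ε.app x v' ∧ v' - σ.app x p ∈ KJ := by
    intro v' hv'
    refine jsub_induction (p := fun v' => ∃ p, p ∈ Jsub m G k S P0 x ∧
        π₀.app x p = ε.app x v' ∧ v' - σ.app x p ∈ KJ) S F' hv'
      ⟨0, zero_mem _, by simp, by simpa using zero_mem KJ⟩ ?_ ?_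
    · rintro a b ⟨p, hp, hπ, hK⟩ ⟨p', hp', hπ', hK'⟩
      refine ⟨p + p', add_mem hp hp', by rw [map_add, hπ, hπ', map_add], ?_⟩
      have heq : a + b - σ.app x (p + p') = (a - σ.app x p) + (b - σ.app x p') := by
        rw [map_add]; abel
      rw [heq]; exact add_mem hK hK'
    · intro y α hα w
      obtain ⟨pw, hpw⟩ := hsurjπ y (ε.app y w)
      refine ⟨P0.map α pw, map_mem_jsub S P0 α hα pw, ?_, ?_⟩
      · rw [nat_app_apply π₀ α pw, hpw, ← nat_app_apply ε α w]
      · have heq : F'.map α w - σ.app x (P0.map α pw) = F'.map α (w - σ.app y pw) := by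
          rw [map_sub, nat_app_apply σ α pw]
        rw [heq]
        refine map_mem_relSup S F' _ α hα ?_
        show w - σ.app y pw ∈ LinearMap.ker (ε.app y).hom
        rw [LinearMap.mem_ker, map_sub, hσap y pw, hpw, sub_self]
  -- Step 2 : elements of `Jsub P0` killed by `π₀` map into `KJ` under `σ`
  have step2 : ∀ p : P0.obj x, p ∈ Jsub m G k S P0 x → π₀.app x p = 0 → σ.app x p ∈ KJ := by
    intro p hp hπ
    obtain ⟨q, hq⟩ := hex0 p hπ
    obtain ⟨r, hr⟩ := hH1 q (by rw [hq]; exact hp)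
    have hp' : p = d1.app x (q - d2.app x r) := by
      rw [map_sub, hd2ap, sub_zero, hq]
    have main : ∀ t : P1.obj x, t ∈ Jsub m G k S P1 x → σ.app x (d1.app x t) ∈ KJ := by
      intro t ht
      refine jsub_induction (p := fun t => σ.app x (d1.app x t) ∈ KJ) S P1 ht
        (by simpa using zero_mem KJ)
        (fun a b ha hb => by show σ.app x (d1.app x (a + b)) ∈ KJ
                             rw [map_add, map_add]; exact add_mem ha hb) ?_
      intro y α hα w
      have h1 : σ.app x (d1.app x (P1.map α w)) = F'.map α (σ.app y (d1.app y w)) := by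
        rw [nat_app_apply d1 α w, nat_app_apply σ α _]
      rw [h1]
      refine map_mem_relSup S F' _ α hα ?_
      show σ.app y (d1.app y w) ∈ LinearMap.ker (ε.app y).hom
      rw [LinearMap.mem_ker, hσap, hd1ap]
    rw [hp']
    exact main _ hr
  obtain ⟨p, hp, hπ, hK⟩ := step1 v (hgenF v)
  have hπ0 : π₀.app x p = 0 := by rw [hπ, hv]
  have h2 := step2 p hp hπ0
  have hdec : v = (v - σ.app x p) + σ.app x p := by abel
  rw [hdec]
  exact add_mem hK h2

end Chase

section Homology

lemma eq_zero_of_isZero {M : ModuleCat.{0} k} (h : IsZero M) (a : M) : a = 0 := by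
  have h0 : (𝟙 M : M ⟶ M) = 0 := h.eq_of_src _ _
  have h1 : (𝟙 M : M ⟶ M) a = (0 : M ⟶ M) a := by rw [h0]
  simpa using h1

lemma subsingleton_of_isZero {M : ModuleCat.{0} k} (h : IsZero M) : Subsingleton M :=
  ⟨fun a b => by rw [eq_zero_of_isZero h a, eq_zero_of_isZero h b]⟩

variable (V : ModG m G k)

/-- Evaluated homology of the `H_0`-image of the resolution computes the derived functors,
pointwise. -/
noncomputable def derivedEval (P : ProjectiveResolution V) (x : FImG m G) (a b c : ℕ)
    (hab : (ComplexShape.down ℕ).prev b = a) (hbc : (ComplexShape.down ℕ).next b = c) :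
    (((HiS m G k S b).obj V).obj x) ≅
      (((((H0S m G k S).mapHomologicalComplex (ComplexShape.down ℕ)).obj P.complex).sc' a b c).map
        ((evaluation (FImG m G) (ModuleCat.{0} k)).obj x)).homology :=
  ((evaluation (FImG m G) (ModuleCat.{0} k)).obj x).mapIso
      (P.isoLeftDerivedObj (H0S m G k S) b ≪≫
        ShortComplex.homologyMapIso
          ((((H0S m G k S).mapHomologicalComplex (ComplexShape.down ℕ)).obj P.complex).isoSc'
            a b c hab hbc)) ≪≫
    (ShortComplex.mapHomologyIso _ _).symm

/-- Extraction of the concrete content of the vanishing of a slice of `H_1^S`. -/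
lemma H1_extract (P : ProjectiveResolution V) (x : FImG m G)
    (hx : Subsingleton (((HiS m G k S 1).obj V).obj x)) :
    ∀ q : (P.complex.X 1).obj x,
      (P.complex.d 1 0).app x q ∈ Jsub m G k S (P.complex.X 0) x →
      ∃ r, q - (P.complex.d 2 1).app x r ∈ Jsub m G k S (P.complex.X 1) x := by
  intro q hq
  have hzero : IsZero (((HiS m G k S 1).obj V).obj x) := by
    haveI := hx
    exact ModuleCat.isZero_of_subsingleton _
  have hz2 := hzero.of_iso (derivedEval S V P x 2 1 0
    (by simpa using ChainComplex.prev ℕ 1) (ChainComplex.next_nat_succ 0)).symm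
  have hex := (ShortComplex.exact_iff_isZero_homology _).mpr hz2
  rw [ShortComplex.moduleCat_exact_iff] at hex
  -- now unfold the concrete shape
  obtain ⟨rr, hrr⟩ := hex (Submodule.Quotient.mk q) (by
    show Submodule.mapQ _ _ ((P.complex.d 1 0).app x).hom
      (Jsub_le_comap_app m G k S (P.complex.d 1 0) x) (Submodule.Quotient.mk q) = 0
    rw [Submodule.mapQ_apply, Submodule.Quotient.mk_eq_zero]
    exact hq)
  obtain ⟨r, rfl⟩ := Submodule.Quotient.mk_surjective _ rr
  refine ⟨r, ?_⟩
  have : Submodule.mapQ _ _ ((P.complex.d 2 1).app x).hom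
      (Jsub_le_comap_app m G k S (P.complex.d 2 1) x)
      (Submodule.Quotient.mk r) = Submodule.Quotient.mk q := hrr
  rw [Submodule.mapQ_apply] at this
  have h2 := (Submodule.Quotient.eq _).mp this
  have h3 : q - (P.complex.d 2 1).app x r = -((P.complex.d 2 1).app x r - q) := by abel
  rw [h3]
  exact neg_mem h2

/-- The concrete content of the vanishing of a slice of `H_0^S`. -/
lemma H0_trivial (P : ProjectiveResolution V) (x : FImG m G)
    (πV : P.complex.X 0 ⟶ V) (hd1 : P.complex.d 1 0 ≫ πV = 0)
    (hπsurj : ∀ z : FImG m G, Function.Surjective (πV.app z))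
    (hexact0 : ∀ (z : FImG m G) (a : (P.complex.X 0).obj z),
        πV.app z a = 0 → ∃ b, (P.complex.d 1 0).app z b = a)
    (hgenV : ∀ b : V.obj x, b ∈ Jsub m G k S V x) :
    Subsingleton (((HiS m G k S 0).obj V).obj x) := by
  -- Jsub V x is contained in the image of Jsub P0 x
  have himg : ∀ w : V.obj x, w ∈ Jsub m G k S V x →
      ∃ c, c ∈ Jsub m G k S (P.complex.X 0) x ∧ πV.app x c = w := by
    intro w hw
    refine jsub_induction (p := fun w => ∃ c, c ∈ Jsub m G k S (P.complex.X 0) x ∧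
        πV.app x c = w) S V hw ⟨0, zero_mem _, map_zero _⟩ ?_ ?_
    · rintro w1 w2 ⟨c1, hc1, hπ1⟩ ⟨c2, hc2, hπ2⟩
      exact ⟨c1 + c2, add_mem hc1 hc2, by rw [map_add, hπ1, hπ2]⟩
    · intro y α hα u
      obtain ⟨p, hp⟩ := hπsurj y u
      exact ⟨(P.complex.X 0).map α p, map_mem_jsub S _ α hα p,
        by rw [nat_app_apply πV α p, hp]⟩
  -- exactness of the evaluated short complex at 0
  have hex : (((((H0S m G k S).mapHomologicalComplex (ComplexShape.down ℕ)).obj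
      P.complex).sc' 1 0 0).map ((evaluation (FImG m G) (ModuleCat.{0} k)).obj x)).Exact := by
    rw [ShortComplex.moduleCat_exact_iff]
    intro a _
    obtain ⟨b₀, rfl⟩ := Submodule.Quotient.mk_surjective _ a
    obtain ⟨c, hc, hπc⟩ := himg (πV.app x b₀) (hgenV _)
    obtain ⟨t, ht⟩ := hexact0 x (b₀ - c) (by rw [map_sub, hπc, sub_self])
    refine ⟨Submodule.Quotient.mk t, ?_⟩
    show Submodule.mapQ _ _ ((P.complex.d 1 0).app x).hom
      (Jsub_le_comap_app m G k S (P.complex.d 1 0) x) (Submodule.Quotient.mk t)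
      = Submodule.Quotient.mk b₀
    rw [Submodule.mapQ_apply, ht]
    rw [Submodule.Quotient.eq]
    simpa using neg_mem hc
  have hz : IsZero (((HiS m G k S 0).obj V).obj x) := by
    have hz2 := (ShortComplex.exact_iff_isZero_homology _).mp hex
    exact hz2.of_iso (derivedEval S V P x 1 0 0
      (by simpa using ChainComplex.prev ℕ 0) ChainComplex.next_nat_zero)
  exact subsingleton_of_isZero hz

end Homology

end InducedProofAux

section MainProof

open CategoryTheory Limits

theorem main_result (m : ℕ) (hm : 0 < m) (G : Type) [Group G] [Finite G]
    (k : Type) [Field k] [CharZero k] (S : Finset (Fin m)) (hS : S.Nonempty)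
    (s : Fin m → ℕ) (V : ModG m G k) (hV : FinitelyGenerated m G k V)
    (hgen : GeneratedBySlice m G k S s V) (h : tS m G k S 1 V ≤ tS m G k S 0 V) :
    IsInduced m G k S V := by
  classical
  let L := inclR m G S s
  let F' : ModG m G k := L.lan.obj (L ⋙ V)
  let ε : F' ⟶ V := ((L.lanAdjunction (ModuleCat.{0} k)).counit).app V
  haveI hEpi : Epi ε := hgen
  set d0 := ∑ j ∈ S, s j with hd0
  obtain ⟨P⟩ := (inferInstance : HasProjectiveResolution V).out
  haveI := P.projective 0
  let πV : P.complex.X 0 ⟶ V :=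
    P.π.f 0 ≫ (HomologicalComplex.singleObjXSelf (ComplexShape.down ℕ) 0 V).hom
  haveI : Epi πV := epi_comp _ _
  have hπsurj : ∀ z : FImG m G, Function.Surjective (πV.app z) := fun z =>
    (ModuleCat.epi_iff_surjective _).mp inferInstance
  have hεsurj : ∀ z : FImG m G, Function.Surjective (ε.app z) := fun z =>
    (ModuleCat.epi_iff_surjective _).mp inferInstance
  let σ : P.complex.X 0 ⟶ F' := Projective.factorThru πV ε
  have hσ : σ ≫ ε = πV := Projective.factorThru_comp _ _
  have hd1 : P.complex.d 1 0 ≫ πV = 0 := by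
    show P.complex.d 1 0 ≫ (P.π.f 0 ≫ _) = 0
    rw [← Category.assoc, P.complex_d_comp_π_f_zero, zero_comp]
  have hd2 : P.complex.d 2 1 ≫ P.complex.d 1 0 = 0 := P.complex.d_comp_d 2 1 0
  have hexact0 : ∀ (z : FImG m G) (a : (P.complex.X 0).obj z),
      πV.app z a = 0 → ∃ b, (P.complex.d 1 0).app z b = a := by
    intro z a ha
    have hex := P.exact₀.map ((evaluation (FImG m G) (ModuleCat.{0} k)).obj z)
    rw [ShortComplex.moduleCat_exact_iff] at hex
    refine hex a ?_
    have hinj : Function.Injective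
        ((HomologicalComplex.singleObjXSelf (ComplexShape.down ℕ) 0 V).hom.app z) :=
      (ModuleCat.mono_iff_injective _).mp inferInstance
    apply hinj
    exact ha.trans (map_zero _).symm
  have hne_of_lt : ∀ x : FImG m G, d0 < InducedProofAux.dS S x →
      ∃ j ∈ S, x.1.comp j ≠ s j := by
    intro x hx
    by_contra hc
    push_neg at hc
    have he : InducedProofAux.dS S x = d0 := Finset.sum_congr rfl (fun j hj => hc j hj)
    omega
  have hgenV : ∀ x : FImG m G, d0 < InducedProofAux.dS S x →
      ∀ b : V.obj x, b ∈ Jsub m G k S V x := by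
    intro x hx b
    obtain ⟨v, rfl⟩ := hεsurj x b
    have hv := InducedProofAux.lan_mem_jsub k S s (L ⋙ V) x (hne_of_lt x hx) v
    refine InducedProofAux.jsub_induction (p := fun w => ε.app x w ∈ Jsub m G k S V x)
      S _ hv ?_ ?_ ?_
    · show ε.app x 0 ∈ Jsub m G k S V x
      rw [map_zero]; exact zero_mem _
    · intro a b ha hb
      show ε.app x (a + b) ∈ Jsub m G k S V x
      rw [map_add]; exact add_mem ha hb
    · intro y α hα w
      show ε.app x (((inclR m G S s).lan.obj (L ⋙ V)).map α w) ∈ Jsub m G k S V x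
      rw [InducedProofAux.nat_app_apply ε α w]
      exact InducedProofAux.map_mem_jsub S V α hα _
  have hT0 : ∀ x : FImG m G, d0 < InducedProofAux.dS S x →
      Subsingleton (((HiS m G k S 0).obj V).obj x) := fun x hx =>
    InducedProofAux.H0_trivial S V P x πV hd1 hπsurj hexact0 (hgenV x hx)
  have ht0 : tS m G k S 0 V ≤ ((d0 : ℕ∞) : WithBot ℕ∞) := by
    refine sSup_le ?_
    rintro b ⟨s', hs', rfl⟩
    obtain ⟨x, hxS, hnt⟩ := hs'
    have hle : ∑ j ∈ S, s' j ≤ d0 := by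
      by_contra hgt
      push_neg at hgt
      have hdx : d0 < InducedProofAux.dS S x := by
        have he : InducedProofAux.dS S x = ∑ j ∈ S, s' j :=
          Finset.sum_congr rfl (fun j hj => hxS j hj)
        omega
      exact absurd hnt (not_nontrivial_iff_subsingleton.mpr (hT0 x hdx))
    show (((∑ j ∈ S, s' j : ℕ) : ℕ∞) : WithBot ℕ∞) ≤ ((d0 : ℕ∞) : WithBot ℕ∞)
    exact_mod_cast hle
  have hH1triv : ∀ x : FImG m G, d0 < InducedProofAux.dS S x →
      Subsingleton (((HiS m G k S 1).obj V).obj x) := by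
    intro x hx
    rw [← not_nontrivial_iff_subsingleton]
    intro hnt
    have hmem : (((InducedProofAux.dS S x : ℕ) : ℕ∞) : WithBot ℕ∞) ∈
        ((fun s' : Fin m → ℕ => (((∑ j ∈ S, s' j : ℕ) : ℕ∞) : WithBot ℕ∞)) ''
          {s' | SliceNonzero m G k S ((HiS m G k S 1).obj V) s'}) :=
      ⟨fun j => x.1.comp j, ⟨x, fun j _ => rfl, hnt⟩, rfl⟩
    have hle : (((InducedProofAux.dS S x : ℕ) : ℕ∞) : WithBot ℕ∞) ≤ tS m G k S 1 V :=
      le_sSup hmem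
    have hfin := hle.trans (h.trans ht0)
    have hcon : InducedProofAux.dS S x ≤ d0 := by exact_mod_cast hfin
    omega
  have hker : ∀ (x : FImG m G) (v : F'.obj x), ε.app x v = 0 →
      v ∈ InducedProofAux.relSup S F' (fun z => LinearMap.ker (ε.app z).hom) x := by
    intro x v hv
    by_cases hlow : ∃ j ∈ S, x.1.comp j < s j
    · have hz : v = 0 := InducedProofAux.lan_obj_eq_zero k S s (L ⋙ V) x hlow v
      rw [hz]; exact zero_mem _
    by_cases hsl : ∀ j ∈ S, x.1.comp j = s j
    · have hinj := InducedProofAux.counit_app_injective_at_slice k S s V x hsl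
      have hz : v = 0 := by
        apply hinj
        rw [map_zero]
        exact hv
      rw [hz]; exact zero_mem _
    have hne : ∃ j ∈ S, x.1.comp j ≠ s j := by push_neg at hsl; exact hsl
    have hge : ∀ j ∈ S, s j ≤ x.1.comp j := by
      push_neg at hlow; exact hlow
    have hdx : d0 < InducedProofAux.dS S x := by
      obtain ⟨j0, hj0, hne0⟩ := hne
      refine Finset.sum_lt_sum hge ⟨j0, hj0, ?_⟩
      have := hge j0 hj0
      omega
    exact InducedProofAux.key_chase ε σ πV (P.complex.d 1 0) (P.complex.d 2 1) hσ hd1 hd2 x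
      (fun w => InducedProofAux.lan_mem_jsub k S s (L ⋙ V) x hne w)
      hπsurj (hexact0 x)
      (InducedProofAux.H1_extract S V P x (hH1triv x hdx))
      v hv
  have hker0 := InducedProofAux.nakayama S ε hker
  have hmono : ∀ x : FImG m G, Function.Injective (ε.app x) := by
    intro x a b hab
    have h1 : ε.app x (a - b) = 0 := by rw [map_sub, hab, sub_self]
    have h2 := hker0 x (a - b) h1
    rwa [sub_eq_zero] at h2
  haveI : ∀ x : FImG m G, Mono (ε.app x) := fun x =>
    (ModuleCat.mono_iff_injective _).mpr (hmono x)
  haveI : Mono ε := NatTrans.mono_of_mono_app ε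
  haveI : IsIso ε := isIso_of_mono_of_epi ε
  exact ⟨s, L ⋙ V, ⟨(asIso ε).symm⟩⟩

end MainProof

end InducedProofAux

section Statements

open CategoryTheory Limits

theorem FIm.induced_of_t1_le_t0 (m : ℕ) (hm : 0 < m) (G : Type) [Group G] [Finite G]
    (k : Type) [Field k] [CharZero k] (S : Finset (Fin m)) (hS : S.Nonempty)
    (s : Fin m → ℕ) (V : ModG m G k) (hV : FinitelyGenerated m G k V)
    (hgen : GeneratedBySlice m G k S s V) (h : tS m G k S 1 V ≤ tS m G k S 0 V) :
    IsInduced m G k S V :=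
  main_result m hm G k S hS s V hV hgen h

end Statements
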